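/- arXiv:2507.18814 — 5 statements merged into one kernel-verified Lean document; each statement's English description precedes it below -/
import Mathlib

section
/- Let H^{(m)} = Σ W^{y_1…y_m}_{x_1…x_m} a†_{x_1}⋯a†_{x_m} a_{y_m}⋯a_{y_1} be a self-adjoint m-body operator on Fock space, and let H^{(m)}_n denote its restriction to the n-particle sector. Then for all n ≥ m, H^{(m)}_{n+1} = (1/(n+1−m)) Σ_{x∈Λ} a_x† H^{(m)}_n a_x (as operators on the (n+1)-particle sector). -/
open ContinuousLinearMap

section AuxMB

variable {E : Type*} [NormedAddCommGroup E] [InnerProductSpace ℂ E] [CompleteSpace E]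
variable {Λ : Type*} [Fintype Λ] [DecidableEq Λ]

/-- Moving a product of annihilation operators through the sector projections. -/
private lemma mb_annQ (a : Λ → E →L[ℂ] E) (Q : ℕ → E →L[ℂ] E)
    (hQproj : ∀ k, IsIdempotentElem (Q k))
    (hQa : ∀ k x, a x * Q (k + 1) = Q k * (a x * Q (k + 1)))
    (L : List Λ) : ∀ (k : ℕ) (X : E →L[ℂ] E),
      (L.map a).prod * (Q (k + L.length) * X)
        = Q k * ((L.map a).prod * (Q (k + L.length) * X)) := by
  induction L with
  | nil =>
      intro k X
      simp only [List.map_nil, List.prod_nil, one_mul, List.length_nil, Nat.add_zero]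
      rw [← mul_assoc, (hQproj k).eq]
  | cons y L ih =>
      intro k X
      have hQa' : ∀ (Y : E →L[ℂ] E),
          a y * (Q (k + 1) * Y) = Q k * (a y * (Q (k + 1) * Y)) := by
        intro Y
        calc a y * (Q (k + 1) * Y) = (a y * Q (k + 1)) * Y := (mul_assoc _ _ _).symm
          _ = (Q k * (a y * Q (k + 1))) * Y := congrArg (· * Y) (hQa k y)
          _ = Q k * (a y * (Q (k + 1) * Y)) := by rw [mul_assoc, mul_assoc]
      have hidx : k + (y :: L).length = k + 1 + L.length := by
        simp only [List.length_cons]; omega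
      rw [hidx, List.map_cons, List.prod_cons, mul_assoc, ih (k + 1) X]
      exact hQa' _

/-- Moving one creation operator through a product of creation operators. -/
private lemma mb_adjPast {a : Λ → E →L[ℂ] E} {ε : ℂ}
    (hca : ∀ (x y : Λ) (X : E →L[ℂ] E),
      adjoint (a x) * (adjoint (a y) * X)
        = (-ε) • (adjoint (a y) * (adjoint (a x) * X)))
    (L : List Λ) : ∀ (x : Λ) (X : E →L[ℂ] E),
      adjoint (a x) * ((L.map fun y => adjoint (a y)).prod * X)
        = (-ε) ^ L.length • ((L.map fun y => adjoint (a y)).prod * (adjoint (a x) * X)) := by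
  induction L with
  | nil => intro x X; simp
  | cons y L ih =>
      intro x X
      simp only [List.map_cons, List.prod_cons, List.length_cons, mul_assoc]
      rw [hca x y, ih x X, mul_smul_comm, smul_smul, pow_succ,
        mul_comm ((-ε) ^ L.length) (-ε)]

/-- Moving one annihilation operator through a product of annihilation operators. -/
private lemma mb_annPast {a : Λ → E →L[ℂ] E} {ε : ℂ}
    (hc : ∀ (y x : Λ) (X : E →L[ℂ] E),
      a y * (a x * X) = (-ε) • (a x * (a y * X)))
    (L : List Λ) : ∀ (x : Λ) (X : E →L[ℂ] E),
      (L.map a).prod * (a x * X)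
        = (-ε) ^ L.length • (a x * ((L.map a).prod * X)) := by
  induction L with
  | nil => intro x X; simp
  | cons y L ih =>
      intro x X
      simp only [List.map_cons, List.prod_cons, List.length_cons, mul_assoc]
      rw [ih x X, mul_smul_comm, hc y x, smul_smul, ← pow_succ]

/-- The key monomial identity:
`∑ z, a z† (A† B) a z = (n+1-m) • A† B` on the `(n+1)`-particle sector. -/
private lemma mb_monomial (a : Λ → E →L[ℂ] E) (ε : ℂ) (Q : ℕ → E →L[ℂ] E)
    (hQproj : ∀ k, IsIdempotentElem (Q k))
    (hQa : ∀ k x, a x * Q (k + 1) = Q k * (a x * Q (k + 1)))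
    (hNQ : ∀ k, (∑ x, adjoint (a x) * a x) * Q k = (k : ℂ) • Q k)
    (hca : ∀ (x y : Λ) (X : E →L[ℂ] E),
      adjoint (a x) * (adjoint (a y) * X)
        = (-ε) • (adjoint (a y) * (adjoint (a x) * X)))
    (hc : ∀ (y x : Λ) (X : E →L[ℂ] E),
      a y * (a x * X) = (-ε) • (a x * (a y * X)))
    (hε2 : (-ε) * (-ε) = 1)
    (m n : ℕ) (hn : m ≤ n)
    (Lc La : List Λ) (hLc : Lc.length = m) (hLa : La.length = m) :
    ∑ z, adjoint (a z) *
        ((Lc.map fun y => adjoint (a y)).prod * ((La.map a).prod * (a z * Q (n + 1))))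
      = ((n : ℂ) + 1 - (m : ℂ)) •
        ((Lc.map fun y => adjoint (a y)).prod * ((La.map a).prod * Q (n + 1))) := by
  have h1 : m ≤ n + 1 := le_trans hn (Nat.le_succ n)
  have hk : n + 1 - m + m = n + 1 := Nat.sub_add_cancel h1
  have hcast : ((n + 1 - m : ℕ) : ℂ) = (n : ℂ) + 1 - (m : ℂ) := by
    rw [Nat.cast_sub h1]; push_cast; ring
  set Ac := (Lc.map fun y => adjoint (a y)).prod with hAc
  set Ba := (La.map a).prod with hBa
  have step : ∀ z : Λ,
      adjoint (a z) * (Ac * (Ba * (a z * Q (n + 1))))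
        = Ac * ((adjoint (a z) * a z) * (Ba * Q (n + 1))) := by
    intro z
    rw [mb_annPast hc La z (Q (n + 1)), mul_smul_comm, mul_smul_comm,
      mb_adjPast hca Lc z _, smul_smul, hLa, hLc, ← mul_pow, hε2, one_pow, one_smul]
    simp only [mul_assoc]
    rfl
  have hB : Ba * Q (n + 1) = Q (n + 1 - m) * (Ba * Q (n + 1)) := by
    have h := mb_annQ a Q hQproj hQa La (n + 1 - m) 1
    rw [mul_one] at h
    rwa [hLa, hk] at h
  have hNB : (∑ z, adjoint (a z) * a z) * (Ba * Q (n + 1))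
      = ((n : ℂ) + 1 - (m : ℂ)) • (Ba * Q (n + 1)) := by
    conv_lhs => rw [hB, ← mul_assoc, hNQ (n + 1 - m)]
    rw [smul_mul_assoc, ← hB, hcast]
  calc ∑ z, adjoint (a z) * (Ac * (Ba * (a z * Q (n + 1))))
      = ∑ z, Ac * ((adjoint (a z) * a z) * (Ba * Q (n + 1))) :=
        Finset.sum_congr rfl fun z _ => step z
    _ = Ac * ((∑ z, adjoint (a z) * a z) * (Ba * Q (n + 1))) := by
        simp [Finset.mul_sum, Finset.sum_mul]
    _ = ((n : ℂ) + 1 - (m : ℂ)) • (Ac * (Ba * Q (n + 1))) := by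
        rw [hNB, mul_smul_comm]

end AuxMB

/-- **Recursion for `m`-body Hamiltonians between particle sectors.**
Let `Hm = ∑ W^{y}_{x} a†_{x₁}⋯a†_{xₘ} a_{yₘ}⋯a_{y₁}` be a self-adjoint `m`-body operator
on the fermionic (`ε = 1`) or bosonic (`ε = -1`) Fock space over `ℓ²(Λ)` and let `Q n` be the
orthogonal projection onto the `n`-particle sector (the `n`-eigenprojection of the number
operator).  Then for all `n ≥ m`, as operators on the `(n+1)`-particle sector,
`H_{n+1} = (n+1−m)⁻¹ ∑ₓ a x† H_n (a x)`. -/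
theorem mbody_sector_recursion
    {E : Type*} [NormedAddCommGroup E] [InnerProductSpace ℂ E] [CompleteSpace E]
    {Λ : Type*} [Fintype Λ] [DecidableEq Λ]
    (a : Λ → E →L[ℂ] E) (ε : ℂ) (hε : ε = 1 ∨ ε = -1)
    (hccr : ∀ x y, a x * adjoint (a y) + ε • (adjoint (a y) * a x)
        = if x = y then (1 : E →L[ℂ] E) else 0)
    (hccr' : ∀ x y, a x * a y + ε • (a y * a x) = 0)
    (Q : ℕ → E →L[ℂ] E)
    (hQproj : ∀ k, IsIdempotentElem (Q k)) (hQsa : ∀ k, IsSelfAdjoint (Q k))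
    (hNQ : ∀ k, (∑ x, adjoint (a x) * a x) * Q k = (k : ℂ) • Q k)
    (hQa : ∀ k x, a x * Q (k + 1) = Q k * (a x * Q (k + 1)))
    (m : ℕ) (W : (Fin m → Λ) → (Fin m → Λ) → ℂ) (Hm : E →L[ℂ] E)
    (hHm : Hm = ∑ x : Fin m → Λ, ∑ y : Fin m → Λ, W x y •
        ((List.ofFn fun i => adjoint (a (x i))).prod *
          ((List.ofFn fun i => a (y i)).reverse).prod))
    (hsa : IsSelfAdjoint Hm)
    (n : ℕ) (hn : m ≤ n) :
    Hm * Q (n + 1)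
      = ((n : ℂ) + 1 - (m : ℂ))⁻¹ •
          ((∑ x, adjoint (a x) * (Hm * Q n) * a x) * Q (n + 1)) := by
  have hε2 : (-ε) * (-ε) = 1 := by rcases hε with h | h <;> norm_num [h]
  have hεstar : star ε = ε := by rcases hε with h | h <;> simp [h]
  -- pairwise exchange relations
  have hc : ∀ (y x : Λ) (X : E →L[ℂ] E), a y * (a x * X) = (-ε) • (a x * (a y * X)) := by
    intro y x X
    have h2 : a y * a x = (-ε) • (a x * a y) := by
      have h := eq_neg_of_add_eq_zero_left (hccr' y x)
      rw [h, neg_smul]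
    calc a y * (a x * X) = (a y * a x) * X := (mul_assoc _ _ _).symm
      _ = ((-ε) • (a x * a y)) * X := by rw [h2]
      _ = (-ε) • (a x * (a y * X)) := by rw [smul_mul_assoc, mul_assoc]
  have hca : ∀ (x y : Λ) (X : E →L[ℂ] E),
      adjoint (a x) * (adjoint (a y) * X)
        = (-ε) • (adjoint (a y) * (adjoint (a x) * X)) := by
    intro x y X
    have h2 : adjoint (a x) * adjoint (a y) = (-ε) • (adjoint (a y) * adjoint (a x)) := by
      have hs := congrArg star (hccr' y x)
      simp only [star_add, star_mul, star_smul, star_zero, star_eq_adjoint, hεstar] at hs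
      have h := eq_neg_of_add_eq_zero_left hs
      rw [h, neg_smul]
    calc adjoint (a x) * (adjoint (a y) * X) = (adjoint (a x) * adjoint (a y)) * X :=
          (mul_assoc _ _ _).symm
      _ = ((-ε) • (adjoint (a y) * adjoint (a x))) * X := by rw [h2]
      _ = (-ε) • (adjoint (a y) * (adjoint (a x) * X)) := by rw [smul_mul_assoc, mul_assoc]
  have h1 : m ≤ n + 1 := le_trans hn (Nat.le_succ n)
  have hcne : ((n : ℂ) + 1 - (m : ℂ)) ≠ 0 := by
    have : ((n + 1 - m : ℕ) : ℂ) = (n : ℂ) + 1 - (m : ℂ) := by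
      rw [Nat.cast_sub h1]; push_cast; ring
    rw [← this]
    exact_mod_cast Nat.sub_ne_zero_of_lt (Nat.lt_succ_of_le hn)
  -- rewriting the `List.ofFn` products into `List.map` form
  have hofc : ∀ p : Fin m → Λ, (List.ofFn fun i => adjoint (a (p i)))
      = (List.ofFn p).map (fun y => adjoint (a y)) := by
    intro p; rw [List.map_ofFn]; rfl
  have hofa : ∀ q : Fin m → Λ, (List.ofFn fun i => a (q i)).reverse
      = ((List.ofFn q).reverse).map a := by
    intro q; rw [List.map_reverse, List.map_ofFn]; rfl
  have key : (∑ x, adjoint (a x) * (Hm * Q n) * a x) * Q (n + 1)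
      = ((n : ℂ) + 1 - (m : ℂ)) • (Hm * Q (n + 1)) := by
    rw [Finset.sum_mul]
    have step1 : ∀ z : Λ, (adjoint (a z) * (Hm * Q n) * a z) * Q (n + 1)
        = adjoint (a z) * (Hm * (a z * Q (n + 1))) := by
      intro z
      simp only [mul_assoc]
      rw [← hQa n z]
    simp only [step1]
    rw [hHm]
    simp only [hofc, hofa, Finset.sum_mul, Finset.mul_sum, smul_mul_assoc,
      mul_smul_comm, Finset.smul_sum, smul_smul, mul_assoc]
    rw [Finset.sum_comm]
    refine Finset.sum_congr rfl fun p _ => ?_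
    rw [Finset.sum_comm]
    refine Finset.sum_congr rfl fun q _ => ?_
    rw [← Finset.smul_sum,
      mb_monomial a ε Q hQproj hQa hNQ hca hc hε2 m n hn (List.ofFn p)
        ((List.ofFn q).reverse) (by simp) (by simp),
      smul_smul, mul_comm]
  rw [key, smul_smul, inv_mul_cancel₀ hcne, one_smul]
end

section
/- (Key Lemma) Let H = Σ_{m=m_0}^{m_1} H^{(m)} be a sum of self-adjoint m-body operators with H^{(m)} ≥ 0 for all m > m_0. Then for all n ≥ m_1, the (n+1)-particle restriction satisfies H_{n+1} ≥ (1/(n+1−m_0)) Σ_{x∈Λ} a_x† H_n a_x. -/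
open ContinuousLinearMap

section Aux

variable {E : Type*} [NormedAddCommGroup E] [InnerProductSpace ℂ E] [CompleteSpace E]
variable {Λ : Type*} [Fintype Λ] [DecidableEq Λ]
variable (a : Λ → E →L[ℂ] E) (ε : ℂ)

/-- Positivity is preserved by nonneg real scalars. -/
lemma aux_smul_isPositive {T : E →L[ℂ] E} (hT : T.IsPositive) {r : ℝ} (hr : 0 ≤ r) :
    (((r : ℂ)) • T).IsPositive := by
  obtain ⟨h1, h2⟩ := hT
  constructor
  · intro x y
    simp only [coe_coe, coe_smul', Pi.smul_apply, ← Complex.coe_smul]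
    rw [inner_smul_left, inner_smul_right, Complex.conj_ofReal]
    congr 1
    exact h1 x y
  · intro x
    have := h2 x
    simp only [reApplyInnerSelf, coe_smul', Pi.smul_apply, inner_smul_left,
      Complex.conj_ofReal] at *
    simpa [RCLike.re_to_complex, Complex.ofReal_mul] using mul_nonneg hr this

lemma aux_sum_isPositive {ι : Type*} (s : Finset ι) (f : ι → E →L[ℂ] E)
    (h : ∀ i ∈ s, (f i).IsPositive) : (∑ i ∈ s, f i).IsPositive := by
  exact Finset.sum_induction f _ (fun _ _ hA hB => hA.add hB) isPositive_zero h

variable (hε : ε = 1 ∨ ε = -1)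
    (hccr : ∀ x y, a x * adjoint (a y) + ε • (adjoint (a y) * a x)
        = if x = y then (1 : E →L[ℂ] E) else 0)
    (hccr' : ∀ x y, a x * a y + ε • (a y * a x) = 0)

include hε hccr' in
lemma comm_ann (x y : Λ) : a x * a y = -(ε • (a y * a x)) :=
  eq_neg_of_add_eq_zero_left (hccr' x y)

include hε hccr' in
lemma comm_cre (x y : Λ) :
    adjoint (a x) * adjoint (a y) = -(ε • (adjoint (a y) * adjoint (a x))) := by
  have hsε : star ε = ε := by rcases hε with h | h <;> simp [h]
  have h := congrArg star (comm_ann a ε hε hccr' y x)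
  simp only [star_mul, star_smul, star_neg, hsε] at h
  simp only [star_eq_adjoint] at h
  exact h

include hccr in
lemma comm_mix (x y : Λ) :
    a x * adjoint (a y) = (if x = y then (1 : E →L[ℂ] E) else 0) - ε • (adjoint (a y) * a x) :=
  eq_sub_of_add_eq (hccr x y)

include hε hccr hccr' in
/-- `N a_x† = a_x† + a_x† N`. -/
lemma num_comm (x : Λ) :
    (∑ z, adjoint (a z) * a z) * adjoint (a x)
      = adjoint (a x) + adjoint (a x) * (∑ z, adjoint (a z) * a z) := by
  have hε2 : ε * ε = 1 := by rcases hε with h | h <;> simp [h]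
  rw [Finset.sum_mul, Finset.mul_sum]
  have key : ∀ z, adjoint (a z) * a z * adjoint (a x)
      = (if z = x then adjoint (a z) else 0) + adjoint (a x) * (adjoint (a z) * a z) := by
    intro z
    rw [mul_assoc, comm_mix a ε hccr z x, mul_sub, mul_smul_comm,
      ← mul_assoc, comm_cre a ε hε hccr' z x]
    simp [smul_smul, hε2, mul_ite, mul_assoc]
  simp only [key, Finset.sum_add_distrib, Finset.sum_ite_eq', Finset.mem_univ, if_pos]

include hε hccr hccr' in
/-- Key algebraic identity for a monomial with `m` creation and `m` annihilation operators:
`∑_z a_z† M a_z = (N - m) M`. -/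
lemma monomial_key : ∀ (m : ℕ) (x y : Fin m → Λ),
    (∑ z, adjoint (a z) * ((List.ofFn fun i => adjoint (a (x i))).prod *
        ((List.ofFn fun i => a (y i)).reverse).prod) * a z)
      = ((∑ z, adjoint (a z) * a z) - (m : ℂ) • 1) *
          ((List.ofFn fun i => adjoint (a (x i))).prod *
            ((List.ofFn fun i => a (y i)).reverse).prod) := by
  have hε2 : ε * ε = 1 := by rcases hε with h | h <;> simp [h]
  intro m
  induction m with
  | zero => intro x y; simp
  | succ m ih =>
    intro x y
    have hC : (List.ofFn fun i => adjoint (a (x i))).prod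
        = adjoint (a (x 0)) * (List.ofFn fun i : Fin m => adjoint (a (x i.succ))).prod := by
      rw [List.ofFn_succ, List.prod_cons]
    have hD : ((List.ofFn fun i => a (y i)).reverse).prod
        = ((List.ofFn fun i : Fin m => a (y i.succ)).reverse).prod * a (y 0) := by
      rw [List.ofFn_succ, List.reverse_cons, List.prod_append, List.prod_singleton]
    set C := (List.ofFn fun i : Fin m => adjoint (a (x i.succ))).prod with hCdef
    set D := ((List.ofFn fun i : Fin m => a (y i.succ)).reverse).prod with hDdef
    rw [hC, hD]
    have step : ∀ z, adjoint (a z) * (adjoint (a (x 0)) * C * (D * a (y 0))) * a z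
        = adjoint (a (x 0)) * (adjoint (a z) * (C * D) * a z) * a (y 0) := by
      intro z
      calc adjoint (a z) * (adjoint (a (x 0)) * C * (D * a (y 0))) * a z
          = (adjoint (a z) * adjoint (a (x 0))) * (C * D) * (a (y 0) * a z) := by
            simp only [mul_assoc]
        _ = (-(ε • (adjoint (a (x 0)) * adjoint (a z)))) * (C * D) *
              (-(ε • (a z * a (y 0)))) := by
            rw [← comm_cre a ε hε hccr' z (x 0), ← comm_ann a ε hε hccr' (y 0) z]
        _ = (ε * ε) • ((adjoint (a (x 0)) * adjoint (a z)) * (C * D) * (a z * a (y 0))) := by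
            simp [smul_smul, smul_mul_assoc, mul_smul_comm]
        _ = adjoint (a (x 0)) * (adjoint (a z) * (C * D) * a z) * a (y 0) := by
            rw [hε2]; simp only [one_smul, mul_assoc]
    rw [Finset.sum_congr rfl fun z _ => step z]
    rw [← Finset.sum_mul, ← Finset.mul_sum]
    rw [ih (fun i => x i.succ) (fun i => y i.succ)]
    -- now: a_{x0}† * ((N - m) * (C*D)) * a_{y0} = (N - (m+1)) * (a_{x0}† * C * (D * a_{y0}))
    have hcomm : adjoint (a (x 0)) * ((∑ z, adjoint (a z) * a z) - (m : ℂ) • 1)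
        = ((∑ z, adjoint (a z) * a z) - ((m : ℕ) + 1 : ℂ) • 1) * adjoint (a (x 0)) := by
      have h := num_comm a ε hε hccr hccr' (x 0)
      rw [mul_sub, sub_mul, h]
      simp only [mul_smul_comm, mul_one, add_smul, one_smul, smul_mul_assoc, add_mul, one_mul]
      abel
    calc adjoint (a (x 0)) * (((∑ z, adjoint (a z) * a z) - (m : ℂ) • 1) * (C * D)) * a (y 0)
        = (adjoint (a (x 0)) * ((∑ z, adjoint (a z) * a z) - (m : ℂ) • 1)) * (C * D) * a (y 0) := by
          simp only [mul_assoc]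
      _ = (((∑ z, adjoint (a z) * a z) - ((m : ℕ) + 1 : ℂ) • 1) * adjoint (a (x 0))) *
            (C * D) * a (y 0) := by rw [hcomm]
      _ = ((∑ z, adjoint (a z) * a z) - (((m : ℕ) + 1 : ℕ) : ℂ) • 1) *
            (adjoint (a (x 0)) * C * (D * a (y 0))) := by
          rw [show (((m : ℕ) + 1 : ℕ) : ℂ) = ((m : ℕ) : ℂ) + 1 by push_cast; ring]
          simp only [mul_assoc]
end Aux

/-- **Key Lemma.**
Let `H = ∑_{m=m₀}^{m₁} H⁽ᵐ⁾` be a sum of self-adjoint `m`-body operators on the fermionic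
(`ε = 1`) or bosonic (`ε = -1`) Fock space over `ℓ²(Λ)`, with `H⁽ᵐ⁾ ≥ 0` for all `m > m₀`.
Then for all `n ≥ m₁`, as an operator inequality on the `(n+1)`-particle sector,
`H_{n+1} ≥ (n+1−m₀)⁻¹ ∑ₓ a x† H_n (a x)`. -/
theorem key_lemma
    {E : Type*} [NormedAddCommGroup E] [InnerProductSpace ℂ E] [CompleteSpace E]
    {Λ : Type*} [Fintype Λ] [DecidableEq Λ]
    (a : Λ → E →L[ℂ] E) (ε : ℂ) (hε : ε = 1 ∨ ε = -1)
    (hccr : ∀ x y, a x * adjoint (a y) + ε • (adjoint (a y) * a x)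
        = if x = y then (1 : E →L[ℂ] E) else 0)
    (hccr' : ∀ x y, a x * a y + ε • (a y * a x) = 0)
    (Q : ℕ → E →L[ℂ] E)
    (hQproj : ∀ k, IsIdempotentElem (Q k)) (hQsa : ∀ k, IsSelfAdjoint (Q k))
    (hNQ : ∀ k, (∑ x, adjoint (a x) * a x) * Q k = (k : ℂ) • Q k)
    (hQa : ∀ k x, a x * Q (k + 1) = Q k * (a x * Q (k + 1)))
    (m₀ m₁ : ℕ) (hm : m₀ ≤ m₁) (Hbody : ℕ → E →L[ℂ] E)
    (hbody : ∀ m ∈ Finset.Icc m₀ m₁, ∃ W : (Fin m → Λ) → (Fin m → Λ) → ℂ,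
        Hbody m = ∑ x : Fin m → Λ, ∑ y : Fin m → Λ, W x y •
          ((List.ofFn fun i => adjoint (a (x i))).prod *
            ((List.ofFn fun i => a (y i)).reverse).prod))
    (hsa : ∀ m ∈ Finset.Icc m₀ m₁, IsSelfAdjoint (Hbody m))
    (hpos : ∀ m ∈ Finset.Icc m₀ m₁, m₀ < m → (Hbody m).IsPositive)
    (H : E →L[ℂ] E) (hH : H = ∑ m ∈ Finset.Icc m₀ m₁, Hbody m)
    (n : ℕ) (hn : m₁ ≤ n) :
    (Q (n + 1) * (H - ((n : ℂ) + 1 - (m₀ : ℂ))⁻¹ •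
        (∑ x, adjoint (a x) * (H * Q n) * a x)) * Q (n + 1)).IsPositive := by
  classical
  set Np : E →L[ℂ] E := ∑ z, adjoint (a z) * a z with hNp
  -- the per-body key identity
  have hbodykey : ∀ m ∈ Finset.Icc m₀ m₁,
      (∑ z, adjoint (a z) * Hbody m * a z) = (Np - (m : ℂ) • 1) * Hbody m := by
    intro m hmm
    obtain ⟨W, hW⟩ := hbody m hmm
    rw [hW]
    have expand : ∀ z, adjoint (a z) * (∑ x : Fin m → Λ, ∑ y : Fin m → Λ, W x y •
          ((List.ofFn fun i => adjoint (a (x i))).prod *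
            ((List.ofFn fun i => a (y i)).reverse).prod)) * a z
        = ∑ x : Fin m → Λ, ∑ y : Fin m → Λ, W x y •
            (adjoint (a z) * ((List.ofFn fun i => adjoint (a (x i))).prod *
              ((List.ofFn fun i => a (y i)).reverse).prod) * a z) := by
      intro z
      simp only [Finset.mul_sum, Finset.sum_mul, mul_smul_comm, smul_mul_assoc]
    rw [Finset.sum_congr rfl fun z _ => expand z]
    rw [Finset.sum_comm]
    rw [Finset.sum_congr rfl fun x _ => Finset.sum_comm]
    simp only [← Finset.smul_sum]
    rw [Finset.sum_congr rfl fun x _ => Finset.sum_congr rfl fun y _ => by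
      rw [monomial_key a ε hε hccr hccr' m x y]]
    simp only [Finset.mul_sum, mul_smul_comm]
    rw [← hNp]
  -- N is self-adjoint, hence Q k * N = k • Q k
  have hNsa : IsSelfAdjoint Np := by
    rw [hNp]
    simp [IsSelfAdjoint, star_sum, star_mul, star_eq_adjoint, adjoint_adjoint]
  have hQN : ∀ k, Q k * Np = (k : ℂ) • Q k := by
    intro k
    have h := congrArg star (hNQ k)
    simp only [star_mul, star_smul, (hQsa k), hNsa, IsSelfAdjoint] at h
    rw [(hQsa k).star_eq, hNsa.star_eq] at h
    simpa [Complex.star_def, Complex.conj_natCast] using h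
  -- Step 1: `S Q_{n+1} = ∑_m (N - m) H^{(m)} Q_{n+1}` using `a_x Q_{n+1} = Q_n a_x Q_{n+1}`
  have hS1 : (∑ x, adjoint (a x) * (H * Q n) * a x) * Q (n + 1)
      = ∑ m ∈ Finset.Icc m₀ m₁, (Np - (m : ℂ) • 1) * Hbody m * Q (n + 1) := by
    rw [Finset.sum_mul]
    have per : ∀ x, adjoint (a x) * (H * Q n) * a x * Q (n + 1)
        = adjoint (a x) * H * a x * Q (n + 1) := by
      intro x
      calc adjoint (a x) * (H * Q n) * a x * Q (n + 1)
          = adjoint (a x) * (H * (Q n * (a x * Q (n + 1)))) := by simp only [mul_assoc]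
        _ = adjoint (a x) * (H * (a x * Q (n + 1))) := by rw [← hQa n x]
        _ = adjoint (a x) * H * a x * Q (n + 1) := by simp only [mul_assoc]
    rw [Finset.sum_congr rfl fun x _ => per x, ← Finset.sum_mul]
    have h2 : (∑ x, adjoint (a x) * H * a x)
        = ∑ m ∈ Finset.Icc m₀ m₁, (Np - (m : ℂ) • 1) * Hbody m := by
      rw [hH]
      simp only [Finset.mul_sum, Finset.sum_mul]
      rw [Finset.sum_comm]
      exact Finset.sum_congr rfl fun m hmm => hbodykey m hmm
    rw [h2, Finset.sum_mul]
  -- Step 2: sandwich with Q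
  have hQS : Q (n + 1) * (∑ x, adjoint (a x) * (H * Q n) * a x) * Q (n + 1)
      = ∑ m ∈ Finset.Icc m₀ m₁,
          ((n : ℂ) + 1 - (m : ℂ)) • (Q (n + 1) * (Hbody m * Q (n + 1))) := by
    rw [mul_assoc, hS1, Finset.mul_sum]
    refine Finset.sum_congr rfl fun m hmm => ?_
    calc Q (n + 1) * ((Np - (m : ℂ) • 1) * Hbody m * Q (n + 1))
        = (Q (n + 1) * (Np - (m : ℂ) • 1)) * (Hbody m * Q (n + 1)) := by
          simp only [mul_assoc]
      _ = (((n : ℂ) + 1 - (m : ℂ)) • Q (n + 1)) * (Hbody m * Q (n + 1)) := by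
          rw [mul_sub, hQN (n + 1), mul_smul_comm, mul_one, ← sub_smul,
            show ((n + 1 : ℕ) : ℂ) - (m : ℂ) = (n : ℂ) + 1 - (m : ℂ) by push_cast; ring]
      _ = ((n : ℂ) + 1 - (m : ℂ)) • (Q (n + 1) * (Hbody m * Q (n + 1))) := by
          rw [smul_mul_assoc]
  have hQH : Q (n + 1) * H * Q (n + 1)
      = ∑ m ∈ Finset.Icc m₀ m₁, Q (n + 1) * (Hbody m * Q (n + 1)) := by
    rw [hH]
    simp only [Finset.mul_sum, Finset.sum_mul, mul_assoc]
  -- Step 3: the full rearrangement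
  have main : Q (n + 1) * (H - ((n : ℂ) + 1 - (m₀ : ℂ))⁻¹ •
        (∑ x, adjoint (a x) * (H * Q n) * a x)) * Q (n + 1)
      = ∑ m ∈ Finset.Icc m₀ m₁,
          (1 - ((n : ℂ) + 1 - (m₀ : ℂ))⁻¹ * ((n : ℂ) + 1 - (m : ℂ))) •
            (Q (n + 1) * (Hbody m * Q (n + 1))) := by
    rw [mul_sub, sub_mul, mul_smul_comm, smul_mul_assoc, hQH, hQS,
      Finset.smul_sum, ← Finset.sum_sub_distrib]
    refine Finset.sum_congr rfl fun m _ => ?_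
    rw [smul_smul, sub_smul, one_smul]
  rw [main]
  refine aux_sum_isPositive _ _ fun m hmm => ?_
  obtain ⟨hm0, hm1⟩ := Finset.mem_Icc.mp hmm
  have hcne : ((n : ℂ) + 1 - (m₀ : ℂ)) ≠ 0 := by
    rw [show (n : ℂ) + 1 - (m₀ : ℂ) = ((n + 1 - m₀ : ℕ) : ℂ) by
      push_cast [Nat.cast_sub (show m₀ ≤ n + 1 by omega)]; ring]
    exact_mod_cast (show (n + 1 - m₀ : ℕ) ≠ 0 by omega)
  have hcoeff : 1 - ((n : ℂ) + 1 - (m₀ : ℂ))⁻¹ * ((n : ℂ) + 1 - (m : ℂ))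
      = ((((m - m₀ : ℕ) : ℝ) / ((n + 1 - m₀ : ℕ) : ℝ) : ℝ) : ℂ) := by
    push_cast [Nat.cast_sub hm0, Nat.cast_sub (show m₀ ≤ n + 1 by omega)]
    field_simp
    ring
  by_cases hmeq : m = m₀
  · rw [hcoeff, hmeq]
    simp only [Nat.sub_self, Nat.cast_zero, zero_div, Complex.ofReal_zero, zero_smul]
    exact isPositive_zero
  · have hlt : m₀ < m := lt_of_le_of_ne hm0 (Ne.symm hmeq)
    have hP : (Q (n + 1) * (Hbody m * Q (n + 1))).IsPositive := by
      have hconj := (hpos m hmm hlt).conj_adjoint (Q (n + 1))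
      rwa [(hQsa (n + 1)).adjoint_eq] at hconj
    rw [hcoeff]
    exact aux_smul_isPositive hP (by positivity)
end

section
/- Let T, U, V be unitaries on a Hilbert space with U = exp(2πi N/L) and V = exp(2πi D/L), where N = Σ_{x=1}^L N_x and D = Σ_{x=1}^L x N_x, the N_x being commuting self-adjoint operators with integer spectrum, and T a unitary with T† N_x T = N_{(x+1) mod L} (so T† a_x T = a_{(x−1) mod L}). Then VT = UTV, UT = TU, and UV = VU. -/
open ContinuousLinearMap

private lemma zmod_val_succ_aux (n : ℕ) [NeZero n] (y : ZMod n) :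
    (y + 1).val + (if y = -1 then n else 0) = y.val + 1 := by
  cases n with
  | zero => exact absurd rfl (NeZero.ne 0)
  | succ m =>
    by_cases hy : y = -1
    · subst hy
      simp [ZMod.val_neg_one]
    · rw [if_neg hy, add_zero, ZMod.val_add, ZMod.val_one_eq_one_mod]
      have hm : y.val < m := by
        rcases Nat.lt_succ_iff_lt_or_eq.mp y.val_lt with h | h
        · exact h
        · exact absurd (ZMod.val_injective _ (h.trans (ZMod.val_neg_one m).symm)) hy
      have h1 : 1 % (m + 1) = 1 := Nat.mod_eq_of_lt (by omega)
      rw [h1, Nat.mod_eq_of_lt (by omega)]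

/-- **Charge–dipole–translation algebra.**
Let `Nop x` (for `x` in the ring `ℤ/Lℤ`) be commuting self-adjoint operators with integer
spectrum (encoded as `exp(2πi Nop x) = 1`), let `T` be a unitary implementing the translation
`T† (Nop x) T = Nop (x − 1)` (i.e. `T† a_x T = a_{x−1 mod L}`), and set
`U = exp(2πi N / L)`, `V = exp(2πi D / L)` with `N = ∑ₓ Nop x` and `D = ∑ₓ x ⬝ Nop x`.
Then `V T = U T V`, `U T = T U`, and `U V = V U`. -/
theorem charge_dipole_translation_relations
    {E : Type*} [NormedAddCommGroup E] [InnerProductSpace ℂ E] [CompleteSpace E]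
    (L : ℕ) [NeZero L]
    (Nop : ZMod L → E →L[ℂ] E)
    (hsa : ∀ x, IsSelfAdjoint (Nop x))
    (hcomm : ∀ x y, Nop x * Nop y = Nop y * Nop x)
    (hint : ∀ x, NormedSpace.exp ((2 * (Real.pi : ℂ) * Complex.I) • Nop x) = 1)
    (T : E →L[ℂ] E) (hT₁ : adjoint T * T = 1) (hT₂ : T * adjoint T = 1)
    (hT : ∀ x, adjoint T * Nop x * T = Nop (x - 1)) :
    NormedSpace.exp ((2 * (Real.pi : ℂ) * Complex.I / L) •
          ∑ x : ZMod L, (x.val : ℂ) • Nop x) * T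
      = NormedSpace.exp ((2 * (Real.pi : ℂ) * Complex.I / L) • ∑ x : ZMod L, Nop x) *
        (T * NormedSpace.exp ((2 * (Real.pi : ℂ) * Complex.I / L) •
          ∑ x : ZMod L, (x.val : ℂ) • Nop x)) ∧
    NormedSpace.exp ((2 * (Real.pi : ℂ) * Complex.I / L) • ∑ x : ZMod L, Nop x) * T
      = T * NormedSpace.exp ((2 * (Real.pi : ℂ) * Complex.I / L) • ∑ x : ZMod L, Nop x) ∧
    NormedSpace.exp ((2 * (Real.pi : ℂ) * Complex.I / L) • ∑ x : ZMod L, Nop x) *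
        NormedSpace.exp ((2 * (Real.pi : ℂ) * Complex.I / L) •
          ∑ x : ZMod L, (x.val : ℂ) • Nop x)
      = NormedSpace.exp ((2 * (Real.pi : ℂ) * Complex.I / L) •
          ∑ x : ZMod L, (x.val : ℂ) • Nop x) *
        NormedSpace.exp ((2 * (Real.pi : ℂ) * Complex.I / L) • ∑ x : ZMod L, Nop x) := by
  letI : NormedAlgebra ℚ (E →L[ℂ] E) := NormedAlgebra.restrictScalars ℚ ℂ (E →L[ℂ] E)
  set c : ℂ := 2 * (Real.pi : ℂ) * Complex.I / L with hc
  set N : E →L[ℂ] E := ∑ x : ZMod L, Nop x with hN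
  set D : E →L[ℂ] E := ∑ x : ZMod L, (x.val : ℂ) • Nop x with hD
  have hxN : ∀ x, Commute (Nop x) N :=
    fun x => Commute.sum_right _ _ _ fun y _ => hcomm x y
  have hxD : ∀ x, Commute (Nop x) D :=
    fun x => Commute.sum_right _ _ _ fun y _ =>
      (show Commute (Nop x) (Nop y) from hcomm x y).smul_right _
  have hND : Commute N D := Commute.sum_left _ _ _ fun x _ => hxD x
  have hLC : (L : ℂ) ≠ 0 := Nat.cast_ne_zero.mpr (NeZero.ne L)
  have hcL : c * L = 2 * (Real.pi : ℂ) * Complex.I := div_mul_cancel₀ _ hLC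
  -- scalar identity
  have hscalar : ∀ y : ZMod L,
      (((y + 1 : ZMod L)).val : ℂ) = (y.val : ℂ) + 1 + (if y = -1 then -(L : ℂ) else 0) := by
    intro y
    have h := zmod_val_succ_aux L y
    by_cases hy : y = -1
    · rw [if_pos hy] at h ⊢
      have h' : (((y + 1 : ZMod L)).val : ℂ) + L = (y.val : ℂ) + 1 := by exact_mod_cast h
      linear_combination h'
    · rw [if_neg hy, add_zero] at h ⊢
      exact_mod_cast h
  -- translated dipole
  have hsum : ∑ y : ZMod L, (((y + 1 : ZMod L)).val : ℂ) • Nop y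
      = D + N + (-(L : ℂ)) • Nop (-1) := by
    have hterm : ∀ y : ZMod L, (((y + 1 : ZMod L)).val : ℂ) • Nop y
        = (y.val : ℂ) • Nop y + Nop y + (if y = (-1 : ZMod L) then (-(L : ℂ)) • Nop y else 0) := by
      intro y
      rw [hscalar y, add_smul, add_smul, one_smul, ite_smul, zero_smul]
    rw [Finset.sum_congr rfl fun y _ => hterm y, Finset.sum_add_distrib,
      Finset.sum_add_distrib, Finset.sum_ite_eq' Finset.univ (-1 : ZMod L)]
    simp [hD, hN]
  have hTD : adjoint T * D * T = D + N + (-(L : ℂ)) • Nop (-1) := by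
    rw [← hsum, hD, Finset.mul_sum, Finset.sum_mul]
    refine Fintype.sum_equiv (Equiv.subRight (1 : ZMod L)) _ _ fun x => ?_
    simp only [Equiv.subRight_apply]
    rw [mul_smul_comm, smul_mul_assoc, hT x, sub_add_cancel]
  have hTN : adjoint T * N * T = N := by
    rw [hN, Finset.mul_sum, Finset.sum_mul]
    refine Fintype.sum_equiv (Equiv.subRight (1 : ZMod L)) _ _ fun x => ?_
    simp only [Equiv.subRight_apply]
    exact hT x
  -- conjugation of exponentials
  have Tu : (E →L[ℂ] E)ˣ := ⟨T, adjoint T, hT₂, hT₁⟩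
  have hconj : ∀ X : E →L[ℂ] E,
      adjoint T * NormedSpace.exp X * T = NormedSpace.exp (adjoint T * X * T) := by
    intro X
    exact (NormedSpace.exp_units_conj' (⟨T, adjoint T, hT₂, hT₁⟩ : (E →L[ℂ] E)ˣ) X).symm
  have hsmulconj : ∀ (X : E →L[ℂ] E), adjoint T * (c • X) * T = c • (adjoint T * X * T) := by
    intro X
    rw [mul_smul_comm, smul_mul_assoc]
  have key : ∀ X Y : E →L[ℂ] E, adjoint T * X * T = Y → X * T = T * Y := by
    intro X Y h
    simp only [mul_assoc] at h ⊢
    rw [← h, ← mul_assoc, ← mul_assoc, hT₂, one_mul]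
  -- commutation of the pieces
  have habD : Commute (c • D) (c • N) := (hND.symm.smul_left c).smul_right c
  have hDk : Commute (c • D) ((-(2 * (Real.pi : ℂ) * Complex.I)) • Nop (-1)) :=
    ((hxD (-1)).symm.smul_left c).smul_right _
  have hNk : Commute (c • N) ((-(2 * (Real.pi : ℂ) * Complex.I)) • Nop (-1)) :=
    ((hxN (-1)).symm.smul_left c).smul_right _
  -- the extra exponential is 1
  have hexp1 : NormedSpace.exp ((-(2 * (Real.pi : ℂ) * Complex.I)) • Nop (-1)) = 1 := by
    rw [neg_smul]
    calc NormedSpace.exp (-((2 * (Real.pi : ℂ) * Complex.I) • Nop (-1)))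
        = NormedSpace.exp (-((2 * (Real.pi : ℂ) * Complex.I) • Nop (-1))) *
          NormedSpace.exp ((2 * (Real.pi : ℂ) * Complex.I) • Nop (-1)) := by
            rw [hint (-1), mul_one]
      _ = NormedSpace.exp (-((2 * (Real.pi : ℂ) * Complex.I) • Nop (-1)) +
          (2 * (Real.pi : ℂ) * Complex.I) • Nop (-1)) :=
            (NormedSpace.exp_add_of_commute ((Commute.refl _).neg_left)).symm
      _ = 1 := by rw [neg_add_cancel, NormedSpace.exp_zero]
  -- UT = TU
  have hUTc : adjoint T * NormedSpace.exp (c • N) * T = NormedSpace.exp (c • N) := by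
    rw [hconj, hsmulconj, hTN]
  have goal2 : NormedSpace.exp (c • N) * T = T * NormedSpace.exp (c • N) :=
    key _ _ hUTc
  -- VT = T V U
  have hVTc : adjoint T * NormedSpace.exp (c • D) * T
      = NormedSpace.exp (c • D) * NormedSpace.exp (c • N) := by
    rw [hconj, hsmulconj, hTD]
    have hsplit : c • (D + N + (-(L : ℂ)) • Nop (-1))
        = (c • D + c • N) + (-(2 * (Real.pi : ℂ) * Complex.I)) • Nop (-1) := by
      rw [smul_add, smul_add, smul_smul]
      congr 2
      rw [mul_neg, hcL]
    rw [hsplit, NormedSpace.exp_add_of_commute (hDk.add_left hNk),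
      NormedSpace.exp_add_of_commute habD, hexp1, mul_one]
  have goal3 : NormedSpace.exp (c • N) * NormedSpace.exp (c • D)
      = NormedSpace.exp (c • D) * NormedSpace.exp (c • N) := habD.symm.exp
  have hVT : NormedSpace.exp (c • D) * T
      = T * (NormedSpace.exp (c • D) * NormedSpace.exp (c • N)) := key _ _ hVTc
  refine ⟨?_, goal2, goal3⟩
  calc NormedSpace.exp (c • D) * T
      = T * (NormedSpace.exp (c • D) * NormedSpace.exp (c • N)) := hVT
    _ = T * (NormedSpace.exp (c • N) * NormedSpace.exp (c • D)) := by rw [goal3]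
    _ = (T * NormedSpace.exp (c • N)) * NormedSpace.exp (c • D) := by rw [mul_assoc]
    _ = (NormedSpace.exp (c • N) * T) * NormedSpace.exp (c • D) := by rw [goal2]
    _ = NormedSpace.exp (c • N) * (T * NormedSpace.exp (c • D)) := by rw [mul_assoc]
end

section
/- Suppose φ is a normalized joint eigenvector of V with V φ = exp(2πi d_φ/L) φ (d_φ ∈ ℤ), and T is the translation unitary with VT = UTV where U φ' = exp(2πi n_q/L) φ' on the n_q-particle sector. Then V T^j φ = exp(2πi (d_φ/L + j p/q)) T^j φ for j = 0,…,q−1, where n_q = pL/q. In particular, if p and q are coprime, the vectors φ, Tφ, …, T^{q−1}φ are pairwise orthonormal, so the space they span is q-dimensional. -/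
open ContinuousLinearMap
open scoped InnerProductSpace

/-- **Dipole eigenvalues of the translated ground states.**
If `φ` is a normalized `V`-eigenvector with eigenvalue `exp(2πi d/L)`, `T` is a unitary with
`V T = exp(2πi n_q/L) T V` (i.e. `V T = U T V`, `U` acting as the scalar `exp(2πi n_q/L)` on
the `n_q`-particle sector), and `n_q = pL/q` with `p, q` coprime, then
`V (Tʲ φ) = exp(2πi (d/L + j p/q)) Tʲ φ` for `j = 0,…,q−1`; in particular the vectors
`φ, Tφ, …, T^{q−1} φ` are orthonormal and span a `q`-dimensional space. -/
theorem translated_ground_states_eigenvalues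
    {E : Type*} [NormedAddCommGroup E] [InnerProductSpace ℂ E] [CompleteSpace E]
    (L p q n_q : ℕ) (hL : 0 < L) (hp : 1 ≤ p) (hpq : p < q) (hcop : Nat.Coprime p q)
    (hnq : q * n_q = p * L)
    (T V : E →L[ℂ] E)
    (hT₁ : adjoint T * T = 1) (hT₂ : T * adjoint T = 1)
    (hV₁ : adjoint V * V = 1) (hV₂ : V * adjoint V = 1)
    (hVT : V * T = Complex.exp (2 * (Real.pi : ℂ) * Complex.I * n_q / L) • (T * V))
    (φ : E) (hφ : ‖φ‖ = 1) (d : ℤ)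
    (hVφ : V φ = Complex.exp (2 * (Real.pi : ℂ) * Complex.I * d / L) • φ) :
    (∀ j : ℕ, j < q →
        V ((T ^ j) φ)
          = Complex.exp (2 * (Real.pi : ℂ) * Complex.I *
              ((d : ℂ) / L + (j : ℂ) * p / q)) • (T ^ j) φ) ∧
      Orthonormal ℂ (fun j : Fin q => (T ^ (j : ℕ)) φ) ∧
      Module.finrank ℂ
        (Submodule.span ℂ (Set.range fun j : Fin q => (T ^ (j : ℕ)) φ)) = q := by
  have hLne : (L : ℂ) ≠ 0 := Nat.cast_ne_zero.mpr hL.ne'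
  have hqpos : 0 < q := by omega
  have hqne : (q : ℂ) ≠ 0 := Nat.cast_ne_zero.mpr hqpos.ne'
  set μ : ℕ → ℂ := fun j =>
    Complex.exp (2 * (Real.pi : ℂ) * Complex.I * ((d : ℂ) / L + (j : ℂ) * p / q)) with hμ
  have hratio : (n_q : ℂ) / L = (p : ℂ) / q := by
    rw [div_eq_div_iff hLne hqne]
    have h : n_q * q = p * L := by rw [mul_comm]; exact hnq
    exact_mod_cast h
  have hTV : ∀ x : E, adjoint T (T x) = x := fun x => by
    have := congrArg (fun A : E →L[ℂ] E => A x) hT₁; simpa using this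
  have hVad : ∀ x : E, adjoint V (V x) = x := fun x => by
    have := congrArg (fun A : E →L[ℂ] E => A x) hV₁; simpa using this
  have hVinner : ∀ x y : E, ⟪V x, V y⟫_ℂ = ⟪x, y⟫_ℂ := by
    intro x y
    conv_rhs => rw [← hVad x]
    rw [adjoint_inner_left]
  have hTinner : ∀ x y : E, ⟪T x, T y⟫_ℂ = ⟪x, y⟫_ℂ := by
    intro x y
    conv_rhs => rw [← hTV x]
    rw [adjoint_inner_left]
  have hTnorm : ∀ x : E, ‖T x‖ = ‖x‖ := by
    intro x
    have h : ⟪T x, T x⟫_ℂ = ⟪x, x⟫_ℂ := hTinner x x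
    rw [inner_self_eq_norm_sq_to_K, inner_self_eq_norm_sq_to_K] at h
    have h2 : (‖T x‖ : ℝ) ^ 2 = ‖x‖ ^ 2 := by exact_mod_cast h
    nlinarith [norm_nonneg (T x), norm_nonneg x]
  have hnorm : ∀ j : ℕ, ‖(T ^ j) φ‖ = 1 := by
    intro j
    induction j with
    | zero => simpa using hφ
    | succ j ih =>
      rw [pow_succ']
      simpa [hTnorm] using ih
  -- the eigenvalue equation
  have heig : ∀ j : ℕ, V ((T ^ j) φ) = μ j • (T ^ j) φ := by
    intro j
    induction j with
    | zero =>
      simp only [pow_zero, one_apply, hμ]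
      change V φ = _ • φ
      rw [hVφ, mul_div_assoc]
      norm_num
    | succ j ih =>
      have hstep : (T ^ (j + 1)) φ = T ((T ^ j) φ) := by
        rw [pow_succ']; rfl
      rw [hstep]
      have hVTx : V (T ((T ^ j) φ))
          = Complex.exp (2 * (Real.pi : ℂ) * Complex.I * n_q / L) • T (V ((T ^ j) φ)) := by
        have := congrArg (fun A : E →L[ℂ] E => A ((T ^ j) φ)) hVT
        simpa using this
      rw [hVTx, ih, map_smul, smul_smul, ← hstep]
      congr 1
      have harg : 2 * (Real.pi : ℂ) * Complex.I * n_q / L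
          = 2 * (Real.pi : ℂ) * Complex.I * ((p : ℂ) / q) := by
        rw [mul_div_assoc, hratio]
      rw [harg, hμ, ← Complex.exp_add]
      congr 1
      push_cast
      ring
  -- conjugates of the eigenvalues
  have hconj : ∀ j : ℕ, starRingEnd ℂ (μ j)
      = Complex.exp (-(2 * (Real.pi : ℂ) * Complex.I) * ((d : ℂ) / L + (j : ℂ) * p / q)) := by
    intro j
    rw [hμ, ← Complex.exp_conj]
    congr 1
    simp only [map_mul, map_add, map_div₀, map_ofNat, Complex.conj_I, Complex.conj_ofReal,
      map_intCast, map_natCast]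
    ring
  -- distinctness of eigenvalue products
  have hne1 : ∀ i j : ℕ, i < q → j < q → i ≠ j → starRingEnd ℂ (μ i) * μ j ≠ 1 := by
    intro i j hi hj hij h
    rw [hconj, hμ, ← Complex.exp_add] at h
    have h2 : Complex.exp (2 * (Real.pi : ℂ) * Complex.I * (((j : ℂ) - i) * p / q)) = 1 := by
      rw [← h]; congr 1; ring
    rw [Complex.exp_eq_one_iff] at h2
    obtain ⟨n, hn⟩ := h2
    have hpi : (2 : ℂ) * (Real.pi : ℂ) * Complex.I ≠ 0 := by
      simp [Real.pi_ne_zero, Complex.I_ne_zero]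
    have hn' : ((j : ℂ) - i) * p / q = n := by
      have : 2 * (Real.pi : ℂ) * Complex.I * (((j : ℂ) - i) * p / q)
          = 2 * (Real.pi : ℂ) * Complex.I * n := by rw [hn]; ring
      exact mul_left_cancel₀ hpi this
    have hint : ((j : ℤ) - i) * p = n * q := by
      have := (div_eq_iff hqne).mp hn'
      exact_mod_cast this
    have hdvd : (q : ℤ) ∣ ((j : ℤ) - i) * p := ⟨n, by linarith [hint]⟩
    have hco : IsCoprime (q : ℤ) (p : ℤ) := by
      rw [Int.isCoprime_iff_gcd_eq_one]
      exact_mod_cast hcop.symm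
    have hdvd2 : (q : ℤ) ∣ ((j : ℤ) - i) := hco.dvd_of_dvd_mul_right hdvd
    have : ((j : ℤ) - i) = 0 := Int.eq_zero_of_abs_lt_dvd hdvd2 (by
      rw [abs_sub_lt_iff]
      constructor <;> [skip; skip] <;> push_cast <;> omega)
    exact hij (by omega)
  -- orthogonality
  have horth : ∀ i j : ℕ, i < q → j < q → i ≠ j → ⟪(T ^ i) φ, (T ^ j) φ⟫_ℂ = 0 := by
    intro i j hi hj hij
    have h1 : ⟪(T ^ i) φ, (T ^ j) φ⟫_ℂ
        = starRingEnd ℂ (μ i) * μ j * ⟪(T ^ i) φ, (T ^ j) φ⟫_ℂ := by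
      conv_lhs => rw [← hVinner, heig i, heig j]
      rw [inner_smul_left, inner_smul_right]
      ring
    have h2 : (1 - starRingEnd ℂ (μ i) * μ j) * ⟪(T ^ i) φ, (T ^ j) φ⟫_ℂ = 0 := by
      linear_combination h1
    rcases mul_eq_zero.mp h2 with h | h
    · exact absurd (by linear_combination -h) (hne1 i j hi hj hij)
    · exact h
  have hON : Orthonormal ℂ (fun j : Fin q => (T ^ (j : ℕ)) φ) := by
    rw [orthonormal_iff_ite]
    intro i j
    by_cases hij : i = j
    · subst hij
      simp only [eq_self_iff_true, if_true, inner_self_eq_norm_sq_to_K, hnorm i]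
      norm_num
    · simp only [hij, if_false]
      exact horth i j i.isLt j.isLt (fun h => hij (Fin.ext h))
  refine ⟨fun j _ => heig j, hON, ?_⟩
  rw [finrank_span_eq_card hON.linearIndependent, Fintype.card_fin]
end

section
/- (Incompressibility, fermionic case) Let H satisfy: H_n ≥ 0 for n ≥ n_q; H_{n+1} ≥ c Σ_x a_x† H_n a_x for some c > 0 and all n ≥ n_q; H commutes with V = exp(2πi D/L); and ker H_{n_q} = span{φ, Tφ, …, T^{q−1}φ} with the T^j φ being V-eigenvectors with q distinct eigenvalues among the L-th roots of unity times a fixed phase. If the particles are fermions and L ≥ q²/p (so that n_q = pL/q ≥ q), then ker H_{n_q+1} = {0}. -/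
open ContinuousLinearMap

lemma pow_eq_pow_of_zmod_eq {M : Type*} [Monoid M] (L : ℕ) [NeZero L] (u : M)
    (hu : u ^ L = 1) {a b : ℕ} (h : (a : ZMod L) = (b : ZMod L)) : u ^ a = u ^ b := by
  rw [ZMod.natCast_eq_natCast_iff] at h
  calc u ^ a = u ^ (L * (a / L) + a % L) := by rw [Nat.div_add_mod]
    _ = (u ^ L) ^ (a / L) * u ^ (a % L) := by rw [pow_add, pow_mul]
    _ = u ^ (b % L) := by rw [hu, one_pow, one_mul, h]
    _ = (u ^ L) ^ (b / L) * u ^ (b % L) := by rw [hu, one_pow, one_mul]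
    _ = u ^ b := by rw [← pow_mul, ← pow_add, Nat.div_add_mod]

lemma IsPositive.apply_eq_zero_of_re_inner_eq_zero
    {E : Type*} [NormedAddCommGroup E] [InnerProductSpace ℂ E] [CompleteSpace E]
    (T : E →L[ℂ] E) (hT : T.IsPositive) (v : E)
    (hv : (inner ℂ (T v) v : ℂ).re = 0) : T v = 0 := by
  set w := T v with hw
  have hadj : ContinuousLinearMap.adjoint T = T := by
    have := hT.isSelfAdjoint
    rwa [IsSelfAdjoint, star_eq_adjoint] at this
  have hC : 0 ≤ (inner ℂ (T w) w : ℂ).re := hT.2 w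
  have hTwv : (inner ℂ (T w) v : ℂ) = inner ℂ w w := by
    rw [← hadj, adjoint_inner_left, hw]
  have key : ∀ t : ℝ, 0 ≤ 2 * t * ‖w‖ ^ 2 + t ^ 2 * (inner ℂ (T w) w : ℂ).re := by
    intro t
    have h := hT.2 (v + (t : ℂ) • w)
    rw [reApplyInnerSelf] at h
    have hexp : T (v + (t : ℂ) • w) = w + (t : ℂ) • T w := by
      rw [map_add, map_smul, hw]
    rw [hexp] at h
    simp only [inner_add_left, inner_add_right, inner_smul_left, inner_smul_right,
      RCLike.re_to_complex, Complex.add_re, Complex.mul_re, Complex.conj_ofReal,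
      Complex.ofReal_re, Complex.ofReal_im] at h
    have hwv : (inner ℂ w v : ℂ).re = 0 := hv
    have hwin : (inner ℂ w w : ℂ) = ((‖w‖ ^ 2 : ℝ) : ℂ) := by
      rw [inner_self_eq_norm_sq_to_K]; norm_cast
    have hww : (inner ℂ w w : ℂ).re = ‖w‖ ^ 2 := by rw [hwin, Complex.ofReal_re]
    have hvw2 : (inner ℂ (T w) v : ℂ).re = ‖w‖ ^ 2 := by rw [hTwv, hww]
    rw [hwv, hvw2, hww] at h
    ring_nf at h ⊢
    linarith [h]
  set C := (inner ℂ (T w) w : ℂ).re with hCdef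
  set N := ‖w‖ ^ 2 with hNdef
  have hN : N = 0 := by
    by_contra hne
    have hNpos : 0 < N := lt_of_le_of_ne (by positivity) (Ne.symm hne)
    have hC1 : (0:ℝ) < C + 1 := by linarith
    have h := key (-(N / (C + 1)))
    have heq : 2 * (-(N / (C + 1))) * N + (-(N / (C + 1))) ^ 2 * C
        = (-2 * N ^ 2 * (C+1) + N ^ 2 * C) / (C+1)^2 := by
      field_simp
    rw [heq] at h
    have h3 := mul_nonneg h (le_of_lt (pow_pos hC1 2))
    rw [div_mul_cancel₀ _ (ne_of_gt (pow_pos hC1 2))] at h3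
    nlinarith [h3, hNpos, hC]
  have : ‖w‖ = 0 := by nlinarith [norm_nonneg w]
  exact norm_eq_zero.mp this

set_option maxHeartbeats 1000000 in
/-- **Incompressibility at maximal filling (fermionic case).**
On the fermionic Fock space over `ℓ²(ℤ/Lℤ)`, let `H` conserve particle number, satisfy
`H_n ≥ 0` for `n ≥ n_q`, the recursion `H_{n+1} ≥ c ∑ₓ a x† H_n (a x)` for some `c > 0`
and all `n ≥ n_q`, and commute with the dipole unitary `V` (with `V^L = 1` and
`V (a x) = e^{−2πi x/L} (a x) V`).  Assume `ker H_{n_q}` is spanned by an orthonormal family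
`χ j` (`j < q`) of `V`-eigenvectors with `q` distinct eigenvalues among the `L`-th roots of
unity (times a fixed phase).  If `L ≥ q²/p` (so `n_q = pL/q ≥ q`), then
`ker H_{n_q+1} = {0}`. -/
theorem incompressibility_fermions
    {E : Type*} [NormedAddCommGroup E] [InnerProductSpace ℂ E] [CompleteSpace E]
    (L p q n_q : ℕ) [NeZero L] (hp : 1 ≤ p) (hpq : p < q) (hcop : Nat.Coprime p q)
    (hnq : q * n_q = p * L) (hLlarge : q ^ 2 ≤ p * L)
    (a : ZMod L → E →L[ℂ] E)
    -- canonical anticommutation relations (fermions)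
    (hcar : ∀ x y, a x * adjoint (a y) + adjoint (a y) * a x
        = if x = y then (1 : E →L[ℂ] E) else 0)
    (hcar' : ∀ x y, a x * a y + a y * a x = 0)
    -- particle-number sector projections
    (Q : ℕ → E →L[ℂ] E)
    (hQproj : ∀ k, IsIdempotentElem (Q k)) (hQsa : ∀ k, IsSelfAdjoint (Q k))
    (hNQ : ∀ k, (∑ x, adjoint (a x) * a x) * Q k = (k : ℂ) • Q k)
    (hQa : ∀ k x, a x * Q (k + 1) = Q k * (a x * Q (k + 1)))
    -- the Hamiltonian: particle-number conserving, `H_n ≥ 0` for `n ≥ n_q`, recursion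
    (H : E →L[ℂ] E) (hsaH : IsSelfAdjoint H) (hHQ : ∀ k, H * Q k = Q k * H)
    (hpos : ∀ n, n_q ≤ n → (Q n * H * Q n).IsPositive)
    (hrec : ∃ c : ℝ, 0 < c ∧ ∀ n, n_q ≤ n →
        (Q (n + 1) * (H - (c : ℂ) • ∑ x, adjoint (a x) * (H * Q n) * a x)
          * Q (n + 1)).IsPositive)
    -- the dipole unitary `V`
    (V : E →L[ℂ] E) (hV₁ : adjoint V * V = 1) (hV₂ : V * adjoint V = 1)
    (hVL : V ^ L = 1) (hVH : V * H = H * V) (hVQ : ∀ k, V * Q k = Q k * V)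
    (hVa : ∀ x : ZMod L,
        V * a x = Complex.exp (-(2 * (Real.pi : ℂ) * Complex.I * (x.val : ℂ) / L)) •
          (a x * V))
    -- the ground-state space at filling `n_q`
    (χ : Fin q → E) (hON : Orthonormal ℂ χ)
    (hχQ : ∀ j, Q n_q (χ j) = χ j) (hχH : ∀ j, H (χ j) = 0)
    (d : Fin q → ℤ)
    (hχV : ∀ j, V (χ j)
        = Complex.exp (2 * (Real.pi : ℂ) * Complex.I * (d j : ℂ) / L) • χ j)
    (hdist : Function.Injective fun j => ((d j : ZMod L)))
    (hker : ∀ ψ : E, Q n_q ψ = ψ → H ψ = 0 →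
        ψ ∈ Submodule.span ℂ (Set.range χ)) :
    ∀ ψ : E, Q (n_q + 1) ψ = ψ → H ψ = 0 → ψ = 0 := by
  intro ψ₀ hQψ₀ hHψ₀
  classical
  have hL : L ≠ 0 := NeZero.ne L
  have hq0 : 0 < q := lt_of_le_of_lt (Nat.zero_le p) hpq
  set ω : ℂ := Complex.exp (2 * (Real.pi : ℂ) * Complex.I / L) with hωdef
  have hωprim : IsPrimitiveRoot ω L := Complex.isPrimitiveRoot_exp L hL
  have hωL : ω ^ L = 1 := hωprim.pow_eq_one
  have hωne : ω ≠ 0 := Complex.exp_ne_zero _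
  -- rewritten commutation relations
  have hVa' : ∀ x : ZMod L, V * a x = (ω ^ x.val)⁻¹ • (a x * V) := by
    intro x
    rw [hVa x]
    congr 1
    rw [Complex.exp_neg, hωdef, ← Complex.exp_nat_mul]
    congr 1
    push_cast
    ring
  have hχV' : ∀ j, V (χ j) = (ω ^ (d j)) • χ j := by
    intro j
    rw [hχV j]
    congr 1
    rw [hωdef, ← Complex.exp_int_mul]
    congr 1
    push_cast
    ring
  -- V-eigenvalue of χ j is ω ^ d j (as zpow)
  -- the key eigenvector case
  have hqle : q ≤ n_q := by
    have : q * q ≤ q * n_q := by rw [hnq]; nlinarith [hLlarge]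
    exact Nat.le_of_mul_le_mul_left this hq0
  have key : ∀ (k : ℕ) (ψ : E), Q (n_q + 1) ψ = ψ → H ψ = 0 →
      V ψ = ω ^ k • ψ → ψ = 0 := by
    intro k ψ hQψ hHψ hVψ
    by_contra hne
    obtain ⟨c, hc0, hrec'⟩ := hrec
    -- Step A : a x ψ lives in sector n_q
    have hstepA : ∀ x, Q n_q ((a x) ψ) = (a x) ψ := by
      intro x
      have h := congrArg (fun T : E →L[ℂ] E => T ψ) (hQa n_q x)
      simp only [mul_apply_eq_comp] at h
      rw [hQψ] at h
      exact h.symm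
    -- Step B : H (a x ψ) = 0
    have hQadj : ∀ n, ContinuousLinearMap.adjoint (Q n) = Q n := by
      intro n
      have := hQsa n; rwa [IsSelfAdjoint, star_eq_adjoint] at this
    have hstepB : ∀ x, H ((a x) ψ) = 0 := by
      have hposQ := hpos n_q le_rfl
      have hr : ∀ y : ZMod L, (Q n_q * H * Q n_q).reApplyInnerSelf (a y ψ)
          = (inner ℂ (H (a y ψ)) (a y ψ) : ℂ).re := by
        intro y
        rw [reApplyInnerSelf]
        simp only [mul_apply_eq_comp, hstepA y]
        rw [← hQadj n_q, adjoint_inner_left, hstepA y]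
        rfl
      have hge : ∀ y : ZMod L, 0 ≤ (inner ℂ (H (a y ψ)) (a y ψ) : ℂ).re :=
        fun y => (hr y) ▸ hposQ.2 (a y ψ)
      -- recursion inequality
      have hT := (hrec' n_q le_rfl).2 ψ
      rw [reApplyInnerSelf] at hT
      have hSψ : (∑ x, adjoint (a x) * (H * Q n_q) * a x) ψ
          = ∑ y : ZMod L, adjoint (a y) (H (a y ψ)) := by
        rw [ContinuousLinearMap.sum_apply]
        refine Finset.sum_congr rfl fun y _ => ?_
        simp only [mul_apply_eq_comp, hstepA y]
      have hTψ : (Q (n_q + 1) * (H - (c : ℂ) • ∑ x, adjoint (a x) * (H * Q n_q) * a x)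
            * Q (n_q + 1)) ψ
          = -((c : ℂ) • Q (n_q + 1) (∑ y : ZMod L, adjoint (a y) (H (a y ψ)))) := by
        simp only [mul_apply_eq_comp, hQψ, ContinuousLinearMap.sub_apply,
          ContinuousLinearMap.smul_apply, hHψ, hSψ, zero_sub, map_neg, map_smul]
      rw [hTψ] at hT
      have hinner : (inner ℂ (Q (n_q + 1) (∑ y : ZMod L, adjoint (a y) (H (a y ψ)))) ψ : ℂ)
          = ∑ y : ZMod L, (inner ℂ (H (a y ψ)) (a y ψ) : ℂ) := by
        rw [← hQadj (n_q + 1), adjoint_inner_left, hQψ, sum_inner]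
        refine Finset.sum_congr rfl fun y _ => ?_
        rw [adjoint_inner_left]
      rw [inner_neg_left, inner_smul_left, hinner] at hT
      have hre : RCLike.re (-((starRingEnd ℂ) (c : ℂ) *
            ∑ y : ZMod L, (inner ℂ (H (a y ψ)) (a y ψ) : ℂ)))
          = -(c * ∑ y : ZMod L, (inner ℂ (H (a y ψ)) (a y ψ) : ℂ).re) := by
        rw [Complex.conj_ofReal]
        simp only [RCLike.re_to_complex, Complex.neg_re, Complex.mul_re,
          Complex.ofReal_re, Complex.ofReal_im, Complex.re_sum]
        ring
      rw [hre] at hT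
      have hsum0 : ∑ y : ZMod L, (inner ℂ (H (a y ψ)) (a y ψ) : ℂ).re = 0 := by
        have h1 : ∑ y : ZMod L, (inner ℂ (H (a y ψ)) (a y ψ) : ℂ).re ≤ 0 := by
          nlinarith [hT, hc0]
        have h2 : 0 ≤ ∑ y : ZMod L, (inner ℂ (H (a y ψ)) (a y ψ) : ℂ).re :=
          Finset.sum_nonneg fun y _ => hge y
        linarith
      have hzero : ∀ y : ZMod L, (inner ℂ (H (a y ψ)) (a y ψ) : ℂ).re = 0 := by
        intro y
        have := (Finset.sum_eq_zero_iff_of_nonneg (fun y _ => hge y)).mp hsum0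
        exact this y (Finset.mem_univ y)
      intro x
      have hQHQ : (Q n_q * H * Q n_q) (a x ψ) = 0 := by
        apply IsPositive.apply_eq_zero_of_re_inner_eq_zero _ hposQ
        have h := hr x
        rw [reApplyInnerSelf] at h
        simp only [← RCLike.re_to_complex]
        rw [h]
        exact hzero x
      have hQH : Q n_q (H (a x ψ)) = 0 := by
        have : (Q n_q * H * Q n_q) (a x ψ) = Q n_q (H (a x ψ)) := by
          simp only [mul_apply_eq_comp, hstepA x]
        rwa [this] at hQHQ
      have : H (a x ψ) = Q n_q (H (a x ψ)) := by
        conv_lhs => rw [← hstepA x]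
        have := congrArg (fun T : E →L[ℂ] E => T (a x ψ)) (hHQ n_q)
        simpa only [mul_apply_eq_comp, hstepA x] using this
      rw [this, hQH]
    -- Step C : support of x ↦ a x ψ has at most q elements
    have hsupp : ∀ x : ZMod L, a x ψ ≠ 0 → ∃ j, x = (k : ZMod L) - ((d j : ZMod L)) := by
      intro x hx
      obtain ⟨cf, hcf⟩ := (Submodule.mem_span_range_iff_exists_fun ℂ).mp
        (hker _ (hstepA x) (hstepB x))
      obtain ⟨j, hj⟩ : ∃ j, cf j ≠ 0 := by
        by_contra hall
        push_neg at hall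
        apply hx
        rw [← hcf]
        apply Finset.sum_eq_zero
        intro i _
        rw [hall i, zero_smul]
      have e1 : V (a x ψ) = ∑ i, ((ω ^ x.val)⁻¹ * ω ^ k * cf i) • χ i := by
        have h := congrArg (fun T : E →L[ℂ] E => T ψ) (hVa' x)
        simp only [mul_apply_eq_comp, ContinuousLinearMap.smul_apply] at h
        rw [hVψ, map_smul, smul_smul] at h
        rw [h, ← hcf, Finset.smul_sum]
        exact Finset.sum_congr rfl fun i _ => by rw [smul_smul, mul_assoc]
      have e2 : V (a x ψ) = ∑ i, (cf i * ω ^ (d i)) • χ i := by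
        rw [← hcf, map_sum]
        exact Finset.sum_congr rfl fun i _ => by
          rw [map_smul, hχV' i, smul_smul]
      have hco := congrArg (fun w => (inner ℂ (χ j) w : ℂ)) (e2.symm.trans e1)
      simp only [hON.inner_right_fintype] at hco
      have h2 : ω ^ (d j) = (ω ^ x.val)⁻¹ * ω ^ k :=
        mul_left_cancel₀ hj (by linear_combination hco)
      have h4 : ω ^ ((d j) + (x.val : ℤ) - (k : ℤ)) = 1 := by
        rw [zpow_sub₀ hωne, zpow_add₀ hωne, zpow_natCast, zpow_natCast, h2]
        field_simp
      have h5 := (hωprim.zpow_eq_one_iff_dvd _).mp h4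
      have h6 : (((d j) + (x.val : ℤ) - (k : ℤ) : ℤ) : ZMod L) = 0 :=
        (ZMod.intCast_zmod_eq_zero_iff_dvd _ _).mpr h5
      refine ⟨j, ?_⟩
      have hv1 : ((x.val : ℕ) : ZMod L) = x := ZMod.natCast_rightInverse x
      push_cast at h6
      rw [hv1] at h6
      linear_combination h6
    set s : Finset (ZMod L) := Finset.univ.filter (fun x : ZMod L => a x ψ ≠ 0)
      with hsdef
    have hcard : s.card ≤ q := by
      have hfin : s.card ≤ (Finset.univ : Finset (Fin q)).card := by
        apply Finset.card_le_card_of_injOn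
          (fun x => if h : a x ψ ≠ 0 then (hsupp x h).choose else ⟨0, hq0⟩)
        · intro x _; exact Finset.mem_univ _
        · intro x1 hx1 x2 hx2 heq
          have h1 : a x1 ψ ≠ 0 := (Finset.mem_filter.mp hx1).2
          have h2 : a x2 ψ ≠ 0 := (Finset.mem_filter.mp hx2).2
          simp only [dif_pos h1, dif_pos h2] at heq
          rw [(hsupp x1 h1).choose_spec, (hsupp x2 h2).choose_spec, heq]
      simpa using hfin
    -- Step D : total number and the bound
    have hre : ∀ u : E, (inner ℂ u u : ℂ).re = ‖u‖ ^ 2 := by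
      intro u
      have h := inner_self_eq_norm_sq (𝕜 := ℂ) u
      simpa using h
    have hsum : (∑ x : ZMod L, ‖a x ψ‖ ^ 2) = (n_q + 1 : ℝ) * ‖ψ‖ ^ 2 := by
      have hNψ : (∑ x, adjoint (a x) * a x) ψ = ((n_q + 1 : ℕ) : ℂ) • ψ := by
        have h := congrArg (fun T : E →L[ℂ] E => T ψ) (hNQ (n_q + 1))
        simpa only [mul_apply_eq_comp, hQψ, ContinuousLinearMap.smul_apply] using h
      have h2 : (inner ℂ ψ ((∑ x, adjoint (a x) * a x) ψ) : ℂ)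
          = ∑ x : ZMod L, (inner ℂ (a x ψ) (a x ψ) : ℂ) := by
        rw [ContinuousLinearMap.sum_apply, inner_sum]
        refine Finset.sum_congr rfl fun y _ => ?_
        rw [mul_apply_eq_comp, adjoint_inner_right]
      have h3 : (inner ℂ ψ ((∑ x, adjoint (a x) * a x) ψ) : ℂ)
          = ((n_q + 1 : ℕ) : ℂ) * (inner ℂ ψ ψ : ℂ) := by
        rw [hNψ, inner_smul_right]
      have h5 := congrArg Complex.re (h2.symm.trans h3)
      rw [Complex.re_sum] at h5
      simp only [hre] at h5
      have him : (inner ℂ ψ ψ : ℂ).im = 0 := by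
        have h := inner_self_im (𝕜 := ℂ) ψ
        exact h
      rw [Complex.mul_re, him] at h5
      simp only [Complex.natCast_re, Complex.natCast_im, hre, mul_zero, sub_zero] at h5
      rw [h5]
      push_cast
      ring
    have hbound : ∀ x : ZMod L, ‖a x ψ‖ ^ 2 ≤ ‖ψ‖ ^ 2 := by
      intro x
      have h := congrArg (fun T : E →L[ℂ] E => T ψ) (hcar x x)
      simp only [eq_self_iff_true, if_true, ContinuousLinearMap.add_apply, mul_apply_eq_comp,
        one_apply_eq_self] at h
      have h2 := congrArg (fun w => (inner ℂ ψ w : ℂ)) h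
      simp only [inner_add_right] at h2
      have e1 : (inner ℂ ψ ((a x) ((adjoint (a x)) ψ)) : ℂ)
          = (inner ℂ (adjoint (a x) ψ) (adjoint (a x) ψ) : ℂ) := by
        rw [← adjoint_inner_left]
      have e2 : (inner ℂ ψ ((adjoint (a x)) ((a x) ψ)) : ℂ)
          = (inner ℂ (a x ψ) (a x ψ) : ℂ) := by
        rw [adjoint_inner_right]
      rw [e1, e2] at h2
      have h3 := congrArg Complex.re h2
      rw [Complex.add_re, hre, hre, hre] at h3
      nlinarith [norm_nonneg (adjoint (a x) ψ), h3]
    -- contradiction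
    have hψpos : 0 < ‖ψ‖ ^ 2 := by
      have := norm_pos_iff.mpr hne
      positivity
    have hfinal : (n_q + 1 : ℝ) * ‖ψ‖ ^ 2 ≤ q * ‖ψ‖ ^ 2 := by
      calc (n_q + 1 : ℝ) * ‖ψ‖ ^ 2 = ∑ x : ZMod L, ‖a x ψ‖ ^ 2 := hsum.symm
        _ = ∑ x ∈ s, ‖a x ψ‖ ^ 2 := by
            refine (Finset.sum_subset (Finset.filter_subset _ _) ?_).symm
            intro x _ hxs
            have : a x ψ = 0 := by
              by_contra hne'
              exact hxs (Finset.mem_filter.mpr ⟨Finset.mem_univ x, hne'⟩)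
            simp [this]
        _ ≤ ∑ x ∈ s, ‖ψ‖ ^ 2 := Finset.sum_le_sum fun x _ => hbound x
        _ = s.card * ‖ψ‖ ^ 2 := by rw [Finset.sum_const, nsmul_eq_mul]
        _ ≤ q * ‖ψ‖ ^ 2 := by
            apply mul_le_mul_of_nonneg_right _ (by positivity)
            exact_mod_cast hcard
    have : (n_q + 1 : ℝ) ≤ q := le_of_mul_le_mul_right hfinal hψpos
    have : n_q + 1 ≤ q := by exact_mod_cast this
    omega
  -- spectral decomposition of ψ₀ along V
  set ψk : ℕ → E := fun k =>
    (L : ℂ)⁻¹ • ∑ m : ZMod L, (ω ^ (k * m.val))⁻¹ • (V ^ m.val) ψ₀ with hψkdef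
  have hVpow : ∀ (A : E →L[ℂ] E), A * V = V * A → ∀ m : ℕ, A * V ^ m = V ^ m * A := by
    intro A hA m
    induction m with
    | zero => simp
    | succ n ih => rw [pow_succ, ← mul_assoc, ih, mul_assoc, hA, ← mul_assoc]
  have hVQm : ∀ m : ℕ, Q (n_q + 1) ((V ^ m) ψ₀) = (V ^ m) ψ₀ := by
    intro m
    have h := congrArg (fun T : E →L[ℂ] E => T ψ₀)
      (hVpow (Q (n_q + 1)) (hVQ (n_q + 1)).symm m)
    simp only [mul_apply_eq_comp] at h
    rw [hQψ₀] at h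
    exact h
  have hVHm : ∀ m : ℕ, H ((V ^ m) ψ₀) = 0 := by
    intro m
    have h := congrArg (fun T : E →L[ℂ] E => T ψ₀) (hVpow H hVH.symm m)
    simp only [mul_apply_eq_comp] at h
    rw [hHψ₀, map_zero] at h
    exact h
  have hQψk : ∀ k, Q (n_q + 1) (ψk k) = ψk k := by
    intro k
    simp only [hψkdef]
    rw [map_smul, map_sum]
    congr 1
    refine Finset.sum_congr rfl fun m _ => ?_
    rw [map_smul, hVQm]
  have hHψk : ∀ k, H (ψk k) = 0 := by
    intro k
    simp only [hψkdef]
    rw [map_smul, map_sum]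
    have : ∀ m : ZMod L, H ((ω ^ (k * m.val))⁻¹ • (V ^ m.val) ψ₀) = 0 := by
      intro m
      rw [map_smul, hVHm, smul_zero]
    rw [Finset.sum_congr rfl fun m _ => this m]
    simp
  have hVψk : ∀ k, V (ψk k) = ω ^ k • ψk k := by
    intro k
    have hv : ∀ z : ZMod L, ((z.val : ℕ) : ZMod L) = z := fun z =>
      ZMod.natCast_rightInverse z
    have hterm : ∀ m : ZMod L,
        (L : ℂ)⁻¹ • V ((ω ^ (k * m.val))⁻¹ • (V ^ m.val) ψ₀)
        = (L : ℂ)⁻¹ • ω ^ k • ((ω ^ (k * ((m + 1 : ZMod L)).val))⁻¹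
            • (V ^ ((m + 1 : ZMod L)).val) ψ₀) := by
      intro m
      congr 1
      have hop : (V ^ ((m + 1 : ZMod L)).val) = V ^ (m.val + 1) := by
        apply pow_eq_pow_of_zmod_eq L V hVL
        rw [hv (m + 1)]
        push_cast [hv m]
        ring
      have hco : ω ^ (k * ((m + 1 : ZMod L)).val) = ω ^ (k * m.val + k) := by
        apply pow_eq_pow_of_zmod_eq L ω hωL
        push_cast [hv (m + 1), hv m]
        ring
      rw [hop, hco, map_smul, smul_smul]
      have hVV : V ((V ^ m.val) ψ₀) = (V ^ (m.val + 1)) ψ₀ := by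
        rw [← mul_apply_eq_comp, ← pow_succ']
      rw [hVV]
      congr 1
      rw [pow_add, mul_inv]
      field_simp
    calc V (ψk k)
        = ∑ m : ZMod L, (L : ℂ)⁻¹ • V ((ω ^ (k * m.val))⁻¹ • (V ^ m.val) ψ₀) := by
          simp only [hψkdef]
          rw [map_smul, map_sum, Finset.smul_sum]
      _ = ∑ m : ZMod L, (L : ℂ)⁻¹ • ω ^ k • ((ω ^ (k * ((m + 1 : ZMod L)).val))⁻¹
            • (V ^ ((m + 1 : ZMod L)).val) ψ₀) :=
          Finset.sum_congr rfl fun m _ => hterm m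
      _ = ∑ m : ZMod L, (L : ℂ)⁻¹ • ω ^ k • ((ω ^ (k * m.val))⁻¹
            • (V ^ m.val) ψ₀) :=
          Fintype.sum_equiv (Equiv.addRight (1 : ZMod L)) _ _ (fun m => rfl)
      _ = (L : ℂ)⁻¹ • ω ^ k • ∑ m : ZMod L, ((ω ^ (k * m.val))⁻¹
            • (V ^ m.val) ψ₀) := by
          rw [Finset.smul_sum, Finset.smul_sum]
      _ = ω ^ k • ψk k := by
          simp only [hψkdef]
          rw [smul_comm]
  have hdecomp : ∑ k ∈ Finset.range L, ψk k = ψ₀ := by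
    have hswap : ∑ k ∈ Finset.range L, ψk k
        = (L : ℂ)⁻¹ • ∑ m : ZMod L,
            (∑ k ∈ Finset.range L, ((ω ^ m.val)⁻¹) ^ k) • (V ^ m.val) ψ₀ := by
      simp only [hψkdef]
      rw [← Finset.smul_sum, Finset.sum_comm]
      congr 1
      refine Finset.sum_congr rfl fun m _ => ?_
      rw [Finset.sum_smul]
      refine Finset.sum_congr rfl fun k _ => ?_
      congr 1
      rw [inv_pow, ← pow_mul, mul_comm m.val k]
    have hgeom : ∀ m : ZMod L,
        (∑ k ∈ Finset.range L, ((ω ^ m.val)⁻¹) ^ k) = if m = 0 then (L : ℂ) else 0 := by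
      intro m
      by_cases hm : m = 0
      · subst hm
        simp [ZMod.val_zero]
      · rw [if_neg hm]
        set ζ : ℂ := (ω ^ m.val)⁻¹ with hζ
        have hζL : ζ ^ L = 1 := by
          rw [hζ, inv_pow, ← pow_mul, mul_comm, pow_mul, hωL, one_pow]
          exact inv_one
        have hmv : m.val ≠ 0 := fun h => hm (by
          have := (ZMod.val_eq_zero m).mp h
          exact this)
        have hζne : ζ ≠ 1 := by
          rw [hζ]
          intro h1
          have h2 : ω ^ m.val = 1 := by
            have h3 := congrArg Inv.inv h1
            simpa using h3
          exact hωprim.pow_ne_one_of_pos_of_lt hmv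
            (ZMod.val_lt m) h2
        have hg := geom_sum_mul ζ L
        rw [hζL, sub_self] at hg
        rcases mul_eq_zero.mp hg with h | h
        · exact h
        · exact absurd (sub_eq_zero.mp h) hζne
    rw [hswap]
    rw [Finset.sum_congr rfl fun m _ => by rw [hgeom m]]
    rw [Fintype.sum_eq_single (0 : ZMod L) (fun m hm => by rw [if_neg hm, zero_smul])]
    rw [if_pos rfl, ZMod.val_zero, pow_zero, one_apply_eq_self, smul_smul,
      inv_mul_cancel₀ (Nat.cast_ne_zero.mpr hL : (L : ℂ) ≠ 0), one_smul]
  have : ψ₀ = 0 := by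
    rw [← hdecomp]
    apply Finset.sum_eq_zero
    intro k _
    exact key k (ψk k) (hQψk k) (hHψk k) (hVψk k)
  exact this
end
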